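/- (Fiber at a singular double point: (ℤ/2) × 𝔾_aⁿ.) Let k be a field, n ≥ 1, and a ∈ k with a ≠ 0. For a commutative k-algebra R set G(R) := {(ξ,η) ∈ Rⁿ × R : η + a·η² = 0 and 1 + 2aη ∈ R^×}, with operation (ξ̃,η̃)∘(ξ,η) := (ξ + (1+2aη)²·ξ̃, η + η̃ + 2a·η·η̃). Then for every R: (a) for (ξ,η) with η + aη² = 0 the element e := −a·η is an idempotent of R, the condition 1 + 2aη ∈ R^× is automatic, and (1+2aη)² = 1; (b) G(R) is a group, and the map (ξ,η) ↦ (−a·η, ξ) is a group isomorphism from G(R) onto E(R) × Rⁿ, where E(R) is the set of idempotents of R equipped with the group operation e∘e' = e + e' − 2ee' and Rⁿ carries addition. In particular, if R is a field then E(R) = {0,1} ≅ ℤ/2ℤ, so G(R) ≅ (ℤ/2ℤ) × Rⁿ. -/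

import Mathlib

noncomputable section

variable {k : Type*} [Field k]

/-- The group `G(R)` at a singular double point: `{(ξ,η) : η + aη² = 0, 1 + 2aη ∈ R^×}`. -/
def singFiber (n : ℕ) (a : k) (R : Type*) [CommRing R] [Algebra k R] :
    Set ((Fin n → R) × R) :=
  {p | p.2 + algebraMap k R a * p.2 ^ 2 = 0 ∧ IsUnit (1 + 2 * algebraMap k R a * p.2)}

/-- The operation `(ξ̃,η̃)∘(ξ,η) = (ξ + (1+2aη)²·ξ̃, η + η̃ + 2a·η·η̃)`. -/
def singFiberOp (n : ℕ) (a : k) {R : Type*} [CommRing R] [Algebra k R]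
    (p q : (Fin n → R) × R) : (Fin n → R) × R :=
  (fun i => q.1 i + (1 + 2 * algebraMap k R a * q.2) ^ 2 * p.1 i,
   q.2 + p.2 + 2 * algebraMap k R a * q.2 * p.2)

/-- **Fiber at a singular double point: `(ℤ/2) × 𝔾ₐⁿ`.**
(a) If `η + aη² = 0` then `e := −aη` is idempotent, `1 + 2aη` is automatically a unit, and
`(1 + 2aη)² = 1`; (b) `G(R)` is a group and `(ξ,η) ↦ (−aη, ξ)` is a group isomorphism onto
`E(R) × Rⁿ`, where `E(R)` is the set of idempotents with `e∘e' = e + e' − 2ee'` and `Rⁿ`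
carries addition.  In particular over a field `E(R) = {0,1} ≅ ℤ/2ℤ`. -/
theorem sing_fiber_group {n : ℕ} (hn : 1 ≤ n) (a : k) (ha : a ≠ 0)
    (R : Type*) [CommRing R] [Algebra k R] :
    -- (a)
    (∀ η : R, η + algebraMap k R a * η ^ 2 = 0 →
      (-(algebraMap k R a * η)) * (-(algebraMap k R a * η)) = -(algebraMap k R a * η) ∧
      IsUnit (1 + 2 * algebraMap k R a * η) ∧
      (1 + 2 * algebraMap k R a * η) ^ 2 = 1) ∧
    -- (b): `G(R)` is a group with identity `(0,0)`
    ((∀ p q, p ∈ singFiber n a R → q ∈ singFiber n a R →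
        singFiberOp n a p q ∈ singFiber n a R) ∧
      ((0, 0) ∈ singFiber n a R) ∧
      (∀ p, p ∈ singFiber n a R →
        singFiberOp n a p (0, 0) = p ∧ singFiberOp n a (0, 0) p = p) ∧
      (∀ p q s, p ∈ singFiber n a R → q ∈ singFiber n a R → s ∈ singFiber n a R →
        singFiberOp n a (singFiberOp n a p q) s = singFiberOp n a p (singFiberOp n a q s)) ∧
      (∀ p, p ∈ singFiber n a R → ∃ q, q ∈ singFiber n a R ∧
        singFiberOp n a p q = (0, 0) ∧ singFiberOp n a q p = (0, 0))) ∧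
    -- `(ξ,η) ↦ (−aη, ξ)` is a group isomorphism onto `E(R) × Rⁿ`
    (∃ φ : {p : (Fin n → R) × R // p ∈ singFiber n a R} ≃
        ({e : R // e * e = e} × (Fin n → R)),
      (∀ p, ((φ p).1 : R) = -(algebraMap k R a * p.val.2) ∧ (φ p).2 = p.val.1) ∧
      (∀ p q s, s.val = singFiberOp n a p.val q.val →
        ((φ s).1 : R) = ((φ p).1 : R) + ((φ q).1 : R) - 2 * ((φ p).1 : R) * ((φ q).1 : R) ∧
        (φ s).2 = (φ p).2 + (φ q).2)) ∧
    -- in particular, over a field the only idempotents are `0` and `1`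
    (IsField R → ∀ e : R, e * e = e → e = 0 ∨ e = 1) := by

  have key : ∀ η : R, η + algebraMap k R a * η ^ 2 = 0 →
      (1 + 2 * algebraMap k R a * η) * (1 + 2 * algebraMap k R a * η) = 1 := by
    intro η h
    linear_combination (4 * algebraMap k R a) * h
  have idem : ∀ η : R, η + algebraMap k R a * η ^ 2 = 0 →
      (-(algebraMap k R a * η)) * (-(algebraMap k R a * η)) = -(algebraMap k R a * η) := by
    intro η h
    linear_combination (algebraMap k R a) * h
  have hβ : algebraMap k R a * algebraMap k R a⁻¹ = 1 := by
    rw [← map_mul, mul_inv_cancel₀ ha, map_one]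
  have hclosed : ∀ p q, p ∈ singFiber n a R → q ∈ singFiber n a R →
      singFiberOp n a p q ∈ singFiber n a R := by
    intro p q hp hq
    obtain ⟨hp1, hp2⟩ := hp
    obtain ⟨hq1, hq2⟩ := hq
    refine ⟨?_, ?_⟩
    · show (q.2 + p.2 + 2 * algebraMap k R a * q.2 * p.2) +
        algebraMap k R a * (q.2 + p.2 + 2 * algebraMap k R a * q.2 * p.2) ^ 2 = 0
      linear_combination (1 + 2 * algebraMap k R a * q.2) ^ 2 * hp1 + hq1
    · have h : (1 + 2 * algebraMap k R a * (singFiberOp n a p q).2)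
          = (1 + 2 * algebraMap k R a * q.2) * (1 + 2 * algebraMap k R a * p.2) := by
        show (1 + 2 * algebraMap k R a * (q.2 + p.2 + 2 * algebraMap k R a * q.2 * p.2)) = _
        ring
      rw [h]
      exact hq2.mul hp2
  have hmemzero : ((0, 0) : (Fin n → R) × R) ∈ singFiber n a R := by
    refine ⟨by simp, ?_⟩
    simpa using isUnit_one
  refine ⟨fun η h => ⟨idem η h, IsUnit.of_mul_eq_one _ (key η h), by
      rw [sq]; exact key η h⟩, ⟨hclosed, hmemzero, ?_, ?_, ?_⟩, ?_, ?_⟩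
  · -- identity laws
    intro p hp
    constructor
    · show ((fun i => (0 : R) + (1 + 2 * algebraMap k R a * 0) ^ 2 * p.1 i),
        (0 : R) + p.2 + 2 * algebraMap k R a * 0 * p.2) = p
      refine Prod.ext ?_ (by ring)
      funext i; simp
    · show ((fun i => p.1 i + (1 + 2 * algebraMap k R a * p.2) ^ 2 * 0),
        p.2 + 0 + 2 * algebraMap k R a * p.2 * 0) = p
      refine Prod.ext ?_ (by ring)
      funext i; simp
  · -- associativity
    intro p q s _ _ _
    refine Prod.ext ?_ ?_
    · funext i
      show s.1 i + (1 + 2 * algebraMap k R a * s.2) ^ 2 *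
          (q.1 i + (1 + 2 * algebraMap k R a * q.2) ^ 2 * p.1 i) =
        (s.1 i + (1 + 2 * algebraMap k R a * s.2) ^ 2 * q.1 i) +
          (1 + 2 * algebraMap k R a *
            (s.2 + q.2 + 2 * algebraMap k R a * s.2 * q.2)) ^ 2 * p.1 i
      ring
    · show s.2 + (q.2 + p.2 + 2 * algebraMap k R a * q.2 * p.2) +
          2 * algebraMap k R a * s.2 * (q.2 + p.2 + 2 * algebraMap k R a * q.2 * p.2) =
        (s.2 + q.2 + 2 * algebraMap k R a * s.2 * q.2) + p.2 +
          2 * algebraMap k R a * (s.2 + q.2 + 2 * algebraMap k R a * s.2 * q.2) * p.2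
      ring
  · -- inverses
    intro p hp
    obtain ⟨hp1, hp2⟩ := hp
    have hsq : (1 + 2 * algebraMap k R a * p.2) ^ 2 = 1 := by rw [sq]; exact key p.2 hp1
    refine ⟨(-p.1, p.2), ⟨hp1, hp2⟩, ?_, ?_⟩
    · refine Prod.ext ?_ ?_
      · funext i
        show -p.1 i + (1 + 2 * algebraMap k R a * p.2) ^ 2 * p.1 i = (0 : R)
        rw [hsq]; ring
      · show p.2 + p.2 + 2 * algebraMap k R a * p.2 * p.2 = (0 : R)
        linear_combination 2 * hp1
    · refine Prod.ext ?_ ?_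
      · funext i
        show p.1 i + (1 + 2 * algebraMap k R a * p.2) ^ 2 * (-p.1 i) = (0 : R)
        rw [hsq]; ring
      · show p.2 + p.2 + 2 * algebraMap k R a * p.2 * p.2 = (0 : R)
        linear_combination 2 * hp1
  · -- the isomorphism
    refine ⟨⟨fun p => (⟨-(algebraMap k R a * p.val.2), idem _ p.property.1⟩, p.val.1),
      fun e => ⟨(e.2, -(algebraMap k R a⁻¹ * e.1.val)), ?_, ?_⟩, ?_, ?_⟩, fun p => ⟨rfl, rfl⟩, ?_⟩
    · show -(algebraMap k R a⁻¹ * e.1.val) +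
        algebraMap k R a * (-(algebraMap k R a⁻¹ * e.1.val)) ^ 2 = 0
      linear_combination (algebraMap k R a * (algebraMap k R a⁻¹) ^ 2) * e.1.property +
        (algebraMap k R a⁻¹ * e.1.val) * hβ
    · refine IsUnit.of_mul_eq_one _ (key _ ?_)
      show -(algebraMap k R a⁻¹ * e.1.val) +
        algebraMap k R a * (-(algebraMap k R a⁻¹ * e.1.val)) ^ 2 = 0
      linear_combination (algebraMap k R a * (algebraMap k R a⁻¹) ^ 2) * e.1.property +
        (algebraMap k R a⁻¹ * e.1.val) * hβ
    · -- left inverse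
      intro p
      refine Subtype.ext (Prod.ext rfl ?_)
      show -(algebraMap k R a⁻¹ * -(algebraMap k R a * p.val.2)) = p.val.2
      linear_combination p.val.2 * hβ
    · -- right inverse
      intro e
      refine Prod.ext (Subtype.ext ?_) rfl
      show -(algebraMap k R a * -(algebraMap k R a⁻¹ * e.1.val)) = e.1.val
      linear_combination e.1.val * hβ
    · -- homomorphism property
      intro p q s hs
      have hq1 : q.val.2 + algebraMap k R a * q.val.2 ^ 2 = 0 := q.property.1
      have hsq : (1 + 2 * algebraMap k R a * q.val.2) ^ 2 = 1 := by
        rw [sq]; exact key _ hq1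
      constructor
      · show -(algebraMap k R a * s.val.2) =
          -(algebraMap k R a * p.val.2) + -(algebraMap k R a * q.val.2) -
            2 * -(algebraMap k R a * p.val.2) * -(algebraMap k R a * q.val.2)
        rw [hs]
        show -(algebraMap k R a *
          (q.val.2 + p.val.2 + 2 * algebraMap k R a * q.val.2 * p.val.2)) = _
        ring
      · show s.val.1 = p.val.1 + q.val.1
        rw [hs]
        funext i
        show q.val.1 i + (1 + 2 * algebraMap k R a * q.val.2) ^ 2 * p.val.1 i =
          p.val.1 i + q.val.1 i
        rw [hsq]; ring
  · -- idempotents in a field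
    intro hF e he
    letI := hF.toField
    rcases mul_eq_zero.mp (show e * (e - 1) = 0 by linear_combination he) with h | h
    · exact Or.inl h
    · exact Or.inr (by linear_combination h)

end
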